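/- Fix β > 1, δ ∈ (0,1), α ∈ (-1,1) with (1/n) δ(1-δ) e^{-δβ} > n e^{-(1-α)β}. Suppose x₁(0),…,x_n(0) ∈ S^{d-1} satisfy ⟨x_i(0), x_j(0)⟩ ≥ 1-δ for all i,j in a subset I ⊂ {1,…,n}, and let (x_i(·)) solve the self-attention dynamics. If ⟨x_i(t), x_k(t)⟩ ≤ α for all i ∈ I, k ∉ I, and t ∈ [0,T], then ⟨x_i(t), x_j(t)⟩ ≥ 1-δ for all i,j ∈ I and t ∈ [0,T]. -/

import Mathlib

open RealInnerProductSpace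

private lemma side_bound' {d n : ℕ} {β α ρ : ℝ} (hβ : 0 < β)
    (x : Fin n → EuclideanSpace ℝ (Fin d))
    (hsphere : ∀ k, ‖x k‖ = 1) (I : Finset (Fin n)) {i j : Fin n}
    (hi : i ∈ I) (hj : j ∈ I)
    (hρ : ⟪x i, x j⟫ = ρ) (hρ0 : 0 ≤ ρ)
    (hmin : ∀ k ∈ I, ∀ l ∈ I, ρ ≤ ⟪x k, x l⟫)
    (hout : ∀ k ∉ I, ⟪x i, x k⟫ ≤ α) :
    (1/(n:ℝ)) * ((1 - ρ^2) * Real.exp (β*(ρ-1))) - 2*(n:ℝ)*Real.exp (-(1-α)*β) ≤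
      ⟪∑ k, (Real.exp (β * ⟪x i, x k⟫) / ∑ k', Real.exp (β * ⟪x i, x k'⟫)) •
        (x k - ⟪x i, x k⟫ • x i), x j⟫ := by
  have hn : 0 < n := i.pos
  haveI : Nonempty (Fin n) := ⟨i⟩
  have hip : ∀ k l, |⟪x k, x l⟫| ≤ 1 := fun k l => by
    simpa [hsphere] using abs_real_inner_le_norm (x k) (x l)
  have hself : ∀ k, ⟪x k, x k⟫ = 1 := fun k => by
    rw [real_inner_self_eq_norm_mul_norm, hsphere, mul_one]
  set Z := ∑ k', Real.exp (β * ⟪x i, x k'⟫) with hZ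
  have hZpos : 0 < Z := Finset.sum_pos (fun _ _ => Real.exp_pos _) Finset.univ_nonempty
  have hZle : Z ≤ (n:ℝ) * Real.exp β := by
    calc Z ≤ ∑ _k' : Fin n, Real.exp β := by
          refine Finset.sum_le_sum fun k _ => Real.exp_le_exp.2 ?_
          nlinarith [(abs_le.1 (hip i k)).2]
      _ = (n:ℝ) * Real.exp β := by simp [Finset.card_univ, mul_comm]
  have hZge : Real.exp β ≤ Z := by
    have := Finset.single_le_sum (f := fun k' => Real.exp (β * ⟪x i, x k'⟫))
      (fun _ _ => (Real.exp_pos _).le) (Finset.mem_univ i)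
    simpa [hself i, hsphere] using this
  have hexp : ⟪∑ k, (Real.exp (β * ⟪x i, x k⟫) / Z) • (x k - ⟪x i, x k⟫ • x i), x j⟫
      = ∑ k, (Real.exp (β * ⟪x i, x k⟫) / Z) * (⟪x k, x j⟫ - ⟪x i, x k⟫ * ρ) := by
    rw [sum_inner]
    exact Finset.sum_congr rfl fun k _ => by
      rw [real_inner_smul_left, inner_sub_left, real_inner_smul_left, hρ]
  rw [hexp, ← Finset.sum_add_sum_compl I]
  have hρ1 : ρ ≤ 1 := hρ ▸ (abs_le.1 (hip i j)).2
  have hIn : (1/(n:ℝ)) * ((1 - ρ^2) * Real.exp (β*(ρ-1))) ≤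
      ∑ k ∈ I, (Real.exp (β * ⟪x i, x k⟫) / Z) * (⟪x k, x j⟫ - ⟪x i, x k⟫ * ρ) := by
    have hterm : ∀ k ∈ I, 0 ≤ (Real.exp (β * ⟪x i, x k⟫) / Z) * (⟪x k, x j⟫ - ⟪x i, x k⟫ * ρ) := by
      intro k hk
      have h1 : ρ ≤ ⟪x k, x j⟫ := hmin k hk j hj
      have h2 : ⟪x i, x k⟫ * ρ ≤ ρ := by
        nlinarith [(abs_le.1 (hip i k)).2]
      have := div_nonneg (Real.exp_pos (β * ⟪x i, x k⟫)).le hZpos.le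
      nlinarith
    have hj' : (Real.exp (β * ⟪x i, x j⟫) / Z) * (⟪x j, x j⟫ - ⟪x i, x j⟫ * ρ) ≤
        ∑ k ∈ I, (Real.exp (β * ⟪x i, x k⟫) / Z) * (⟪x k, x j⟫ - ⟪x i, x k⟫ * ρ) :=
      Finset.single_le_sum hterm hj
    refine le_trans ?_ hj'
    rw [hself j, hρ]
    have hdiv : Real.exp (β*(ρ-1)) / (n:ℝ) ≤ Real.exp (β * ρ) / Z := by
      rw [div_le_div_iff₀ (by positivity) hZpos]
      calc Real.exp (β*(ρ-1)) * Z ≤ Real.exp (β*(ρ-1)) * ((n:ℝ) * Real.exp β) := by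
            exact mul_le_mul_of_nonneg_left hZle (Real.exp_pos _).le
        _ = Real.exp (β*ρ) * n := by rw [← mul_assoc, mul_comm (Real.exp (β*(ρ-1)))] ; rw [mul_assoc, ← Real.exp_add]; ring_nf
    have h1ρ : 0 ≤ 1 - ρ * ρ := by nlinarith
    calc (1/(n:ℝ)) * ((1 - ρ^2) * Real.exp (β*(ρ-1)))
        = (Real.exp (β*(ρ-1)) / (n:ℝ)) * (1 - ρ * ρ) := by ring
      _ ≤ (Real.exp (β * ρ) / Z) * (1 - ρ * ρ) := mul_le_mul_of_nonneg_right hdiv h1ρ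
  have hOut : -(2*(n:ℝ)*Real.exp (-(1-α)*β)) ≤
      ∑ k ∈ Iᶜ, (Real.exp (β * ⟪x i, x k⟫) / Z) * (⟪x k, x j⟫ - ⟪x i, x k⟫ * ρ) := by
    have hterm : ∀ k ∈ Iᶜ, -(2*Real.exp (-(1-α)*β)) ≤
        (Real.exp (β * ⟪x i, x k⟫) / Z) * (⟪x k, x j⟫ - ⟪x i, x k⟫ * ρ) := by
      intro k hk
      rw [Finset.mem_compl] at hk
      have ha : Real.exp (β * ⟪x i, x k⟫) / Z ≤ Real.exp (-(1-α)*β) := by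
        have h1 : Real.exp (β * ⟪x i, x k⟫) ≤ Real.exp (β * α) :=
          Real.exp_le_exp.2 (by nlinarith [hout k hk])
        calc Real.exp (β * ⟪x i, x k⟫) / Z ≤ Real.exp (β * α) / Real.exp β :=
              div_le_div₀ (Real.exp_pos _).le h1 (Real.exp_pos β) hZge
          _ = Real.exp (-(1-α)*β) := by rw [← Real.exp_sub]; ring_nf
      have ha0 : 0 ≤ Real.exp (β * ⟪x i, x k⟫) / Z := div_nonneg (Real.exp_pos _).le hZpos.le
      have hw : |⟪x k, x j⟫ - ⟪x i, x k⟫ * ρ| ≤ 2 := by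
        have := hip k j
        have := hip i k
        rw [abs_le] at *
        constructor <;> nlinarith
      nlinarith [(abs_le.1 hw).1, (abs_le.1 hw).2, Real.exp_pos (-(1-α)*β)]
    calc -(2*(n:ℝ)*Real.exp (-(1-α)*β)) ≤ (Iᶜ.card : ℝ) * (-(2*Real.exp (-(1-α)*β))) := by
          have hcard : (Iᶜ.card : ℝ) ≤ n := by
            have := Finset.card_le_univ Iᶜ
            simp only [Finset.card_univ, Fintype.card_fin] at this
            exact_mod_cast this
          nlinarith [Real.exp_pos (-(1-α)*β)]
      _ ≤ ∑ k ∈ Iᶜ, (Real.exp (β * ⟪x i, x k⟫) / Z) * (⟪x k, x j⟫ - ⟪x i, x k⟫ * ρ) := by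
          rw [mul_comm]
          exact Finset.card_nsmul_le_sum Iᶜ _ _ hterm |>.trans_eq' (by simp [nsmul_eq_mul, mul_comm])
  linarith

set_option maxHeartbeats 1000000 in
theorem stmt6 {d n : ℕ} (β δ α T : ℝ) (hβ : 1 < β) (hδ : δ ∈ Set.Ioo (0:ℝ) 1)
    (hα : α ∈ Set.Ioo (-1:ℝ) 1)
    (hsep : (1 / (n : ℝ)) * δ * (1 - δ) * Real.exp (-δ * β) >
      (n : ℝ) * Real.exp (-(1 - α) * β))
    (x : Fin n → ℝ → EuclideanSpace ℝ (Fin d))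
    (hsphere : ∀ i t, ‖x i t‖ = 1)
    (hflow : ∀ i t, HasDerivAt (x i)
      (∑ j, (Real.exp (β * ⟪x i t, x j t⟫) / ∑ k, Real.exp (β * ⟪x i t, x k t⟫)) •
        (x j t - ⟪x i t, x j t⟫ • x i t)) t)
    (I : Finset (Fin n))
    (hinit : ∀ i ∈ I, ∀ j ∈ I, 1 - δ ≤ ⟪x i 0, x j 0⟫)
    (hT : 0 ≤ T)
    (hout : ∀ i ∈ I, ∀ k ∉ I, ∀ t ∈ Set.Icc (0:ℝ) T, ⟪x i t, x k t⟫ ≤ α) :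
    ∀ i ∈ I, ∀ j ∈ I, ∀ t ∈ Set.Icc (0:ℝ) T, 1 - δ ≤ ⟪x i t, x j t⟫ := by
  intro i₁ hi₁ j₁ hj₁ t₁ ht₁
  by_contra hcon
  push_neg at hcon
  obtain ⟨hδ0, hδ1⟩ := hδ
  obtain ⟨hα0, hα1⟩ := hα
  have hn : 0 < n := i₁.pos
  have hn' : (0:ℝ) < n := by exact_mod_cast hn
  have hβ0 : 0 < β := by linarith
  set c : ℝ := 1 - δ with hc
  have hc0 : 0 < c := by rw [hc]; linarith
  have hc1 : c < 1 := by rw [hc]; linarith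
  -- continuity of all the inner products
  have hdx : ∀ k, Differentiable ℝ (x k) := fun k s => (hflow k s).differentiableAt
  have hcf : ∀ k l, Continuous fun s => ⟪x k s, x l s⟫ := fun k l =>
    (hdx k).continuous.inner (hdx l).continuous
  -- the separation constant
  set M : ℝ := 2 * (n:ℝ)^2 * Real.exp (-(1-α)*β) with hM
  have hsep' : M < 2 * (δ * c * Real.exp (-δ * β)) := by
    have h2 := mul_lt_mul_of_pos_left hsep (by positivity : (0:ℝ) < 2*n)
    calc M = 2*(n:ℝ)*((n:ℝ)*Real.exp (-(1-α)*β)) := by rw [hM]; ring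
      _ < 2*(n:ℝ)*(1/(n:ℝ)*δ*c*Real.exp (-δ*β)) := h2
      _ = 2*(δ*c*Real.exp (-δ*β)) := by field_simp
  have hψc : M < (1 - c^2) * Real.exp (β*(c-1)) := by
    have he : β*(c-1) = -δ*β := by rw [hc]; ring
    rw [he]
    have h1 : (1 - c^2) * Real.exp (-δ*β) - 2*(δ*c*Real.exp (-δ*β))
        = δ^2 * Real.exp (-δ*β) := by rw [hc]; ring
    nlinarith [Real.exp_pos (-δ*β), sq_nonneg δ]
  -- choose ε by continuity
  have hcont : ContinuousAt (fun ρ : ℝ => (1 - ρ^2) * Real.exp (β*(ρ-1))) c := by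
    fun_prop
  have hev : ∀ᶠ ρ in nhds c, M < (1 - ρ^2) * Real.exp (β*(ρ-1)) :=
    hcont.eventually_mem (Ioi_mem_nhds hψc)
  obtain ⟨ε₀, hε₀, hball⟩ := Metric.eventually_nhds_iff.mp hev
  set ε : ℝ := min (ε₀/2) (c/2) with hε
  have hεpos : 0 < ε := by rw [hε]; positivity
  have hεε₀ : ε < ε₀ := lt_of_le_of_lt (min_le_left _ _) (by linarith)
  have hεc : ε ≤ c/2 := min_le_right _ _
  -- choose η
  set η : ℝ := min ε (c - ⟪x i₁ t₁, x j₁ t₁⟫) / 2 with hη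
  have hcongap : 0 < c - ⟪x i₁ t₁, x j₁ t₁⟫ := by linarith
  have hηpos : 0 < η := by rw [hη]; positivity
  have hηε : η ≤ ε/2 := by
    rw [hη]; nlinarith [min_le_left ε (c - ⟪x i₁ t₁, x j₁ t₁⟫)]
  have hηε₀ : η < ε₀ := by linarith
  have hηc : η ≤ c/2 := by linarith
  have hηt : ⟪x i₁ t₁, x j₁ t₁⟫ ≤ c - η := by
    have h1 : η ≤ (c - ⟪x i₁ t₁, x j₁ t₁⟫)/2 := by
      rw [hη]; nlinarith [min_le_right ε (c - ⟪x i₁ t₁, x j₁ t₁⟫)]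
    linarith
  -- the bad set
  set B : Set ℝ := {s | s ∈ Set.Icc 0 T ∧ ∃ k ∈ I, ∃ l ∈ I, ⟪x k s, x l s⟫ ≤ c - η}
    with hBdef
  have hBclosed : IsClosed B := by
    have hBeq : B = Set.Icc 0 T ∩ ⋃ k ∈ (I:Set (Fin n)), ⋃ l ∈ (I:Set (Fin n)),
        {s | ⟪x k s, x l s⟫ ≤ c - η} := by
      ext s
      simp only [hBdef, Set.mem_setOf_eq, Set.mem_inter_iff, Set.mem_iUnion,
        Finset.mem_coe, exists_prop]
    rw [hBeq]
    refine isClosed_Icc.inter ?_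
    refine I.finite_toSet.isClosed_biUnion fun k _ => ?_
    refine I.finite_toSet.isClosed_biUnion fun l _ => ?_
    exact isClosed_le (hcf k l) continuous_const
  have hBne : B.Nonempty := ⟨t₁, ht₁, i₁, hi₁, j₁, hj₁, hηt⟩
  have hBbdd : BddBelow B := ⟨0, fun s hs => hs.1.1⟩
  set t₀ : ℝ := sInf B with ht₀
  have ht₀B : t₀ ∈ B := hBclosed.csInf_mem hBne hBbdd
  obtain ⟨⟨ht₀0, ht₀T⟩, i, hi, j, hj, hij⟩ := ht₀B
  have h0B : (0:ℝ) ∉ B := by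
    rintro ⟨-, k, hk, l, hl, hle⟩
    have := hinit k hk l hl
    linarith
  have ht₀pos : 0 < t₀ := by
    rcases lt_or_eq_of_le ht₀0 with h | h
    · exact h
    · exact absurd (h ▸ (hBclosed.csInf_mem hBne hBbdd)) h0B
  have hbefore : ∀ s, 0 ≤ s → s < t₀ → ∀ k ∈ I, ∀ l ∈ I, c - η < ⟪x k s, x l s⟫ := by
    intro s hs0 hst k hk l hl
    by_contra hle
    push_neg at hle
    have hsB : s ∈ B := ⟨⟨hs0, hst.le.trans ht₀T⟩, k, hk, l, hl, hle⟩
    exact absurd (csInf_le hBbdd hsB) (not_le.2 hst)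
  have hatt₀ : ∀ k ∈ I, ∀ l ∈ I, c - η ≤ ⟪x k t₀, x l t₀⟫ := by
    intro k hk l hl
    have htend : Filter.Tendsto (fun s => ⟪x k s, x l s⟫) (nhdsWithin t₀ (Set.Iio t₀))
        (nhds ⟪x k t₀, x l t₀⟫) :=
      ((hcf k l).continuousAt).tendsto.mono_left nhdsWithin_le_nhds
    refine ge_of_tendsto htend ?_
    filter_upwards [Ioo_mem_nhdsLT_of_mem (Set.mem_Ioc.2 ⟨ht₀pos, le_refl t₀⟩)] with s hs
    exact (hbefore s hs.1.le hs.2 k hk l hl).le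
  set ρ : ℝ := ⟪x i t₀, x j t₀⟫ with hρdef
  have hρeq : ρ = c - η := le_antisymm hij (hatt₀ i hi j hj)
  have hρ0 : 0 ≤ ρ := by rw [hρeq]; linarith
  have hψρ : M < (1 - ρ^2) * Real.exp (β*(ρ-1)) := by
    apply hball
    rw [Real.dist_eq, hρeq, abs_of_nonpos (by linarith)]
    linarith
  -- the derivative at t₀
  set v : Fin n → EuclideanSpace ℝ (Fin d) := fun k =>
    ∑ m, (Real.exp (β * ⟪x k t₀, x m t₀⟫) / ∑ k', Real.exp (β * ⟪x k t₀, x k' t₀⟫)) •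
      (x m t₀ - ⟪x k t₀, x m t₀⟫ • x k t₀) with hv
  have hD : HasDerivAt (fun s => ⟪x i s, x j s⟫) (⟪x i t₀, v j⟫ + ⟪v i, x j t₀⟫) t₀ :=
    HasDerivAt.inner ℝ (hflow i t₀) (hflow j t₀)
  -- derivative is nonpositive (minimum over [0, t₀] attained at t₀)
  have hDnonpos : ⟪x i t₀, v j⟫ + ⟪v i, x j t₀⟫ ≤ 0 := by
    have h1 : HasDerivWithinAt (fun s => ⟪x i s, x j s⟫) (⟪x i t₀, v j⟫ + ⟪v i, x j t₀⟫)
        (Set.Iio t₀) t₀ := hD.hasDerivWithinAt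
    rw [hasDerivWithinAt_iff_tendsto_slope' (Set.notMem_Iio.2 le_rfl)] at h1
    refine le_of_tendsto h1 ?_
    filter_upwards [Ioo_mem_nhdsLT_of_mem (Set.mem_Ioc.2 ⟨ht₀pos, le_refl t₀⟩)] with s hs
    have hnum : 0 ≤ ⟪x i s, x j s⟫ - ⟪x i t₀, x j t₀⟫ := by
      have := hbefore s hs.1.le hs.2 i hi j hj
      rw [← hρdef, hρeq]; linarith
    have hden : s - t₀ ≤ 0 := by linarith [hs.2]
    rw [slope_def_field]
    exact div_nonpos_of_nonneg_of_nonpos hnum hden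
  -- derivative is positive: contradiction
  have ht₀Icc : t₀ ∈ Set.Icc (0:ℝ) T := ⟨ht₀0, ht₀T⟩
  have hmin' : ∀ k ∈ I, ∀ l ∈ I, ρ ≤ ⟪x k t₀, x l t₀⟫ := by
    intro k hk l hl; rw [hρeq]; exact hatt₀ k hk l hl
  have hS1 : (1/(n:ℝ)) * ((1 - ρ^2) * Real.exp (β*(ρ-1))) - 2*(n:ℝ)*Real.exp (-(1-α)*β)
      ≤ ⟪v i, x j t₀⟫ :=
    side_bound' hβ0 (fun k => x k t₀) (fun k => hsphere k t₀) I hi hj rfl hρ0 hmin'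
      (fun k hk => hout i hi k hk t₀ ht₀Icc)
  have hS2 : (1/(n:ℝ)) * ((1 - ρ^2) * Real.exp (β*(ρ-1))) - 2*(n:ℝ)*Real.exp (-(1-α)*β)
      ≤ ⟪x i t₀, v j⟫ := by
    rw [real_inner_comm]
    exact side_bound' hβ0 (fun k => x k t₀) (fun k => hsphere k t₀) I hj hi
      (real_inner_comm (x j t₀) (x i t₀) ▸ rfl) hρ0 hmin'
      (fun k hk => hout j hj k hk t₀ ht₀Icc)
  have hfinal : 0 < ⟪x i t₀, v j⟫ + ⟪v i, x j t₀⟫ := by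
    have h1 := mul_lt_mul_of_pos_left hψρ (show (0:ℝ) < 1/n by positivity)
    have h2 : (1/(n:ℝ)) * M = 2*(n:ℝ)*Real.exp (-(1-α)*β) := by
      rw [hM]; field_simp
    linarith
  linarith
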